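/- Let φ : E → X be a covering map between topological spaces and let V ⊆ X be an open, path-connected, locally path-connected subset. Assume that every loop in V lifts to loops: for every p ∈ V, every loop γ at p with range contained in V, and every e ∈ φ⁻¹({p}), the lift of γ starting at e ends at e. Then for every path component Ṽ of φ⁻¹(V), the restriction of φ to Ṽ is a homeomorphism of Ṽ onto V. -/

import Mathlib

open unitInterval

/-- Sheet lemma: around any point of `V` there is an open set `W ⊆ V` such that over any
point of `E` lying over `W` there is an open path-connected "sheet" `U ⊆ φ⁻¹(V)`
mapping onto `W`. -/
lemma covering_sheet_lemma {E X : Type} [TopologicalSpace E] [TopologicalSpace X]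
    (φ : E → X) (hφ : IsCoveringMap φ) (V : Set X)
    (hVopen : IsOpen V) (hVlpc : LocPathConnectedSpace V) {v : X} (hv : v ∈ V) :
    ∃ W : Set X, IsOpen W ∧ v ∈ W ∧ W ⊆ V ∧
      ∀ x : E, φ x ∈ W → ∃ U : Set E, IsOpen U ∧ x ∈ U ∧ U ⊆ φ ⁻¹' V ∧
        IsPathConnected U ∧ φ '' U = W := by
  haveI : DiscreteTopology ↥(φ ⁻¹' {v}) := (hφ v).1
  rcases isEmpty_or_nonempty ↥(φ ⁻¹' {v}) with hemp | hne
  · obtain ⟨-, U₀, hvU₀, hU₀o, -, H₀, -⟩ := hφ v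
    refine ⟨U₀ ∩ V, hU₀o.inter hVopen, ⟨hvU₀, hv⟩, Set.inter_subset_right, fun x hx => ?_⟩
    exact isEmptyElim (H₀ ⟨x, hx.1⟩).2
  set T := (hφ v).toTrivialization with hT
  have hvT : v ∈ T.baseSet := (hφ v).mem_toTrivialization_baseSet
  set u : Set ↥V := Subtype.val ⁻¹' T.baseSet with hu
  have hu_open : IsOpen u := T.open_baseSet.preimage continuous_subtype_val
  have hvu : (⟨v, hv⟩ : ↥V) ∈ u := hvT
  set W' := pathComponentIn u (⟨v, hv⟩ : ↥V) with hW'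
  haveI : LocallyPathConnectedSpace ↥V := hVlpc
  have hW'_open : IsOpen W' := hu_open.pathComponentIn _
  have hW'_pc : IsPathConnected W' := isPathConnected_pathComponentIn hvu
  set W := Subtype.val '' W' with hWdef
  have hWV : W ⊆ V := by rintro _ ⟨w, hw, rfl⟩; exact w.2
  have hWbase : W ⊆ T.baseSet := by rintro _ ⟨w, hw, rfl⟩; exact (pathComponentIn_subset hw : w ∈ u)
  have hW_open : IsOpen W := hVopen.isOpenMap_subtype_val _ hW'_open
  have hW_pc : IsPathConnected W := hW'_pc.image continuous_subtype_val
  have hvW : v ∈ W := ⟨_, mem_pathComponentIn_self hvu, rfl⟩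
  refine ⟨W, hW_open, hvW, hWV, fun x hx => ?_⟩
  have hxsrc : x ∈ T.source := T.mem_source.2 (hWbase hx)
  set c := (T x).2 with hc
  set U := T.source ∩ ⇑T ⁻¹' (W ×ˢ ({c} : Set ↥(φ ⁻¹' {v}))) with hU
  have hU_open : IsOpen U :=
    T.continuousOn_toFun.isOpen_inter_preimage T.open_source
      (hW_open.prod (isOpen_discrete _))
  have hxU : x ∈ U := ⟨hxsrc, by
    refine Set.mem_prod.2 ⟨?_, rfl⟩
    rw [T.coe_fst hxsrc]; exact hx⟩
  have hmemU : ∀ y ∈ U, φ y ∈ W ∧ (T y).2 = c := by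
    intro y hy
    have h1 : (T y).1 = φ y := T.coe_fst hy.1
    have h2 := Set.mem_prod.1 hy.2
    exact ⟨h1 ▸ h2.1, h2.2⟩
  have hUV : U ⊆ φ ⁻¹' V := fun y hy => hWV (hmemU y hy).1
  -- points of the sheet via the inverse of T
  have hsymm_mem : ∀ w ∈ W, T.toOpenPartialHomeomorph.symm (w, c) ∈ U ∧
      φ (T.toOpenPartialHomeomorph.symm (w, c)) = w := by
    intro w hw
    have htgt : (w, c) ∈ T.target := T.mem_target.2 (hWbase hw)
    have hsrc := T.toOpenPartialHomeomorph.map_target htgt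
    have happ : T (T.toOpenPartialHomeomorph.symm (w, c)) = (w, c) :=
      T.toOpenPartialHomeomorph.right_inv htgt
    have hproj : φ (T.toOpenPartialHomeomorph.symm (w, c)) = w := by
      have := T.coe_fst hsrc
      rw [happ] at this; exact this.symm
    exact ⟨⟨hsrc, by rw [Set.mem_preimage, happ]; exact Set.mem_prod.2 ⟨hw, rfl⟩⟩, hproj⟩
  have himg : φ '' U = W := by
    apply Set.Subset.antisymm
    · rintro _ ⟨y, hy, rfl⟩; exact (hmemU y hy).1
    · intro w hw
      obtain ⟨h1, h2⟩ := hsymm_mem w hw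
      exact ⟨_, h1, h2⟩
  have hTx : T x = (φ x, c) := Prod.ext (T.coe_fst hxsrc) rfl
  have hUpc : IsPathConnected U := by
    refine ⟨x, hxU, fun {y} hy => ?_⟩
    have hφy : φ y ∈ W := (hmemU y hy).1
    obtain ⟨γ, hγ⟩ := hW_pc.joinedIn _ hx _ hφy
    have hmemt : ∀ t : I, (γ t, c) ∈ T.target := fun t => T.mem_target.2 (hWbase (hγ t))
    have hΓcont : Continuous fun t : I => T.toOpenPartialHomeomorph.symm (γ t, c) :=
      T.toOpenPartialHomeomorph.continuousOn_invFun.comp_continuous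
        (γ.continuous.prodMk continuous_const) hmemt
    have hΓ0 : T.toOpenPartialHomeomorph.symm (γ 0, c) = x := by
      rw [γ.source, ← hTx]
      exact T.toOpenPartialHomeomorph.left_inv hxsrc
    have hΓ1 : T.toOpenPartialHomeomorph.symm (γ 1, c) = y := by
      have hTy : T y = (φ y, c) := Prod.ext (T.coe_fst hy.1) (hmemU y hy).2
      rw [γ.target, ← hTy]
      exact T.toOpenPartialHomeomorph.left_inv hy.1
    refine ⟨⟨⟨fun t => T.toOpenPartialHomeomorph.symm (γ t, c), hΓcont⟩, hΓ0, hΓ1⟩,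
      fun t => (hsymm_mem (γ t) (hγ t)).1⟩
  exact ⟨U, hU_open, hxU, hUV, hUpc, himg⟩

/-- If `φ : E → X` is a covering map and `V ⊆ X` is open, path-connected
and locally path-connected, and every loop in `V` lifts to loops, then the restriction of
`φ` to any path component of `φ⁻¹(V)` is a homeomorphism onto `V`. -/
theorem covering_trivial_over_loop_lifting_region
    {E X : Type} [TopologicalSpace E] [TopologicalSpace X]
    (φ : E → X) (hφ : IsCoveringMap φ) (V : Set X)
    (hVopen : IsOpen V) (hVpc : IsPathConnected V) (hVlpc : LocPathConnectedSpace V)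
    (hloops : ∀ p ∈ V, ∀ γ : Path p p, Set.range ⇑γ ⊆ V →
      ∀ e : E, φ e = p →
        ∀ Γ : C(I, E), (∀ t, φ (Γ t) = γ t) → Γ 0 = e → Γ 1 = e) :
    ∀ e : E, φ e ∈ V →
      ∃ ψ : ↥(pathComponentIn (φ ⁻¹' V) e) ≃ₜ ↥V,
        ∀ x : ↥(pathComponentIn (φ ⁻¹' V) e), (ψ x : X) = φ (x : E) := by
  intro e he
  have heV : e ∈ φ ⁻¹' V := he
  set Vt := pathComponentIn (φ ⁻¹' V) e with hVt
  have heVt : e ∈ Vt := mem_pathComponentIn_self heV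
  -- Vt is open
  have hVtopen : IsOpen Vt := by
    rw [isOpen_iff_mem_nhds]
    intro x hx
    have hxV : φ x ∈ V := (pathComponentIn_subset hx : x ∈ φ ⁻¹' V)
    obtain ⟨W, hWo, hvW, hWV, hsheet⟩ := covering_sheet_lemma φ hφ V hVopen hVlpc hxV
    obtain ⟨U, hUo, hxU, hUV, hUpc, -⟩ := hsheet x hvW
    have hsub : U ⊆ Vt := by
      rw [hVt, ← pathComponentIn_congr hx]
      exact hUpc.subset_pathComponentIn hxU hUV
    exact Filter.mem_of_superset (hUo.mem_nhds hxU) hsub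
  -- injectivity via loop lifting hypothesis
  have hinj : ∀ x y : E, x ∈ Vt → y ∈ Vt → φ x = φ y → x = y := by
    intro x y hx hy hxy
    have hJ : JoinedIn (φ ⁻¹' V) x y := (JoinedIn.symm hx).trans hy
    obtain ⟨α, hα⟩ := hJ
    have hpV : φ x ∈ V := (pathComponentIn_subset hx : x ∈ φ ⁻¹' V)
    have hs : φ (α 0) = φ x := by rw [α.source]
    have ht : φ (α 1) = φ x := by rw [α.target]; exact hxy.symm
    let γ : Path (φ x) (φ x) :=
      ⟨⟨fun t => φ (α t), hφ.continuous.comp α.continuous⟩, hs, ht⟩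
    have hrange : Set.range ⇑γ ⊆ V := by rintro _ ⟨t, rfl⟩; exact hα t
    have h1 := hloops (φ x) hpV γ hrange x rfl α.toContinuousMap (fun t => rfl)
      (by simp)
    have h2 : α.toContinuousMap 1 = y := by simp
    rw [h2] at h1
    exact h1.symm
  -- surjectivity via connectedness of V
  have hVsub : V ⊆ φ '' Vt := by
    have hSopen : IsOpen (φ '' Vt) := hφ.isOpenMap _ hVtopen
    have hdiff : IsOpen (V \ φ '' Vt) := by
      rw [isOpen_iff_mem_nhds]
      intro v hv
      obtain ⟨W, hWo, hvW, hWV, hsheet⟩ := covering_sheet_lemma φ hφ V hVopen hVlpc hv.1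
      refine Filter.mem_of_superset (hWo.mem_nhds hvW) fun w hw => ⟨hWV hw, fun hwS => hv.2 ?_⟩
      obtain ⟨x, hxVt, rfl⟩ := hwS
      obtain ⟨U, hUo, hxU, hUV, hUpc, hUim⟩ := hsheet x hw
      have hUsub : U ⊆ Vt := by
        rw [hVt, ← pathComponentIn_congr hxVt]
        exact hUpc.subset_pathComponentIn hxU hUV
      have hvU : v ∈ φ '' U := hUim ▸ hvW
      exact Set.image_mono hUsub hvU
    by_contra hns
    obtain ⟨v, hv, hvS⟩ := Set.not_subset.mp hns
    have hpre := hVpc.isConnected.isPreconnected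
    have hcov : V ⊆ φ '' Vt ∪ (V \ φ '' Vt) := fun w hw =>
      (em (w ∈ φ '' Vt)).imp id (fun h => ⟨hw, h⟩)
    have := hpre (φ '' Vt) (V \ φ '' Vt) hSopen hdiff hcov
      ⟨φ e, he, ⟨e, heVt, rfl⟩⟩ ⟨v, hv, hv, hvS⟩
    obtain ⟨w, -, hwS, -, hwS'⟩ := this
    exact hwS' hwS
  -- assemble the homeomorphism
  let f : ↥Vt → ↥V := fun x => ⟨φ x, (pathComponentIn_subset x.2 : ↑x ∈ φ ⁻¹' V)⟩
  have hfbij : Function.Bijective f := by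
    constructor
    · intro x y hxy
      exact Subtype.ext (hinj x y x.2 y.2 (congrArg Subtype.val hxy))
    · rintro ⟨v, hv⟩
      obtain ⟨x, hx, rfl⟩ := hVsub hv
      exact ⟨⟨x, hx⟩, rfl⟩
  have hfcont : Continuous f :=
    Continuous.subtype_mk (hφ.continuous.comp continuous_subtype_val) _
  have hfopen : IsOpenMap f := by
    intro U hU
    have h1 : IsOpen (Subtype.val '' U) := hVtopen.isOpenMap_subtype_val _ hU
    have h2 : IsOpen (φ '' (Subtype.val '' U)) := hφ.isOpenMap _ h1
    have h3 : f '' U = Subtype.val ⁻¹' (φ '' (Subtype.val '' U)) := by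
      ext ⟨w, hw⟩
      simp only [Set.mem_image, Set.mem_preimage]
      constructor
      · rintro ⟨x, hx, hfx⟩
        exact ⟨x, ⟨x, hx, rfl⟩, congrArg Subtype.val hfx⟩
      · rintro ⟨z, ⟨z', hz', rfl⟩, hzw⟩
        exact ⟨z', hz', Subtype.ext hzw⟩
    rw [h3]
    exact h2.preimage continuous_subtype_val
  exact ⟨(Equiv.ofBijective f hfbij).toHomeomorphOfContinuousOpen hfcont hfopen,
    fun x => rfl⟩
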